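/- Let a, b ∈ ℂ* with 1 < |a| ≤ |b|, and consider the equivalence on ℂ² \ {0}: (z,w) ∼ (z',w') iff there is n ∈ ℤ with z' = aⁿz and w' = bⁿw. Then the set F = ({|z| ≤ |a|} × {1 < |w| ≤ |b|}) ∪ ({1 < |z| ≤ |a|} × {|w| ≤ |b|}) is a fundamental domain: every point of ℂ² \ {0} is equivalent to exactly one point of F. -/

import Mathlib

open Complex

private lemma hopf_le_iff {c t : ℝ} (hc : 1 < c) (ht : 0 < t) (n : ℤ) :
    c ^ n * t ≤ c ↔ n ≤ ⌊(Real.log c - Real.log t) / Real.log c⌋ := by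
  have hc0 : (0:ℝ) < c := lt_trans one_pos hc
  have hlog : 0 < Real.log c := Real.log_pos hc
  have hpow : (0:ℝ) < c ^ n * t := mul_pos (zpow_pos hc0 n) ht
  rw [Int.le_floor, le_div_iff₀ hlog, ← Real.log_le_log_iff hpow hc0,
    Real.log_mul (ne_of_gt (zpow_pos hc0 n)) (ne_of_gt ht), Real.log_zpow]
  constructor <;> intro h <;> linarith

private lemma hopf_lt_iff {c t : ℝ} (hc : 1 < c) (ht : 0 < t) (n : ℤ) :
    1 < c ^ n * t ↔ ⌊(Real.log c - Real.log t) / Real.log c⌋ ≤ n := by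
  have hc0 : (0:ℝ) < c := lt_trans one_pos hc
  have h := hopf_le_iff hc ht (n + 1)
  rw [zpow_add_one₀ (ne_of_gt hc0), show c ^ n * c * t = c * (c ^ n * t) by ring] at h
  have h2 : 1 < c ^ n * t ↔ ¬ (c * (c ^ n * t) ≤ c) := by
    rw [not_le]
    constructor
    · intro hx; nlinarith
    · intro hx; nlinarith
  rw [h2, h]
  omega

theorem hopf_fundamental_domain
    (a b : ℂ) (ha : 1 < ‖a‖) (hab : ‖a‖ ≤ ‖b‖)
    (F : Set (ℂ × ℂ))
    (hF : F = {p : ℂ × ℂ | ‖p.1‖ ≤ ‖a‖ ∧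
                1 < ‖p.2‖ ∧ ‖p.2‖ ≤ ‖b‖} ∪
              {p : ℂ × ℂ | 1 < ‖p.1‖ ∧ ‖p.1‖ ≤ ‖a‖ ∧
                ‖p.2‖ ≤ ‖b‖}) :
    ∀ p : ℂ × ℂ, p ≠ (0, 0) →
      ∃! q : ℂ × ℂ, q ∈ F ∧ ∃ n : ℤ, q = (a ^ n * p.1, b ^ n * p.2) := by
  intro p hp
  obtain ⟨z, w⟩ := p
  set A := ‖a‖ with hA
  set B := ‖b‖ with hB
  have hB1 : 1 < B := lt_of_lt_of_le ha hab
  have hA0 : (0:ℝ) < A := lt_trans one_pos ha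
  have hB0 : (0:ℝ) < B := lt_trans one_pos hB1
  set u := ‖z‖ with hu
  set v := ‖w‖ with hv
  have habsa : ∀ n : ℤ, ‖a ^ n * z‖ = A ^ n * u := by
    intro n; rw [norm_mul, norm_zpow]
  have habsb : ∀ n : ℤ, ‖b ^ n * w‖ = B ^ n * v := by
    intro n; rw [norm_mul, norm_zpow]
  have hmem : ∀ n : ℤ, ((a ^ n * z, b ^ n * w) ∈ F) ↔
      ((A ^ n * u ≤ A ∧ 1 < B ^ n * v ∧ B ^ n * v ≤ B) ∨
       (1 < A ^ n * u ∧ A ^ n * u ≤ A ∧ B ^ n * v ≤ B)) := by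
    intro n
    rw [hF]
    simp only [Set.mem_union, Set.mem_setOf_eq, habsa, habsb]
  -- the key: a unique n works
  have key : ∃ n₀ : ℤ, ∀ n : ℤ, ((a ^ n * z, b ^ n * w) ∈ F) ↔ n = n₀ := by
    by_cases hz : z = 0
    · have hw : w ≠ 0 := by
        intro hw; exact hp (by simp [hz, hw])
      have hv0 : 0 < v := norm_pos_iff.mpr hw
      have hu0 : u = 0 := by simp [hu, hz]
      refine ⟨⌊(Real.log B - Real.log v) / Real.log B⌋, fun n => ?_⟩
      rw [hmem, hopf_le_iff hB1 hv0, hopf_lt_iff hB1 hv0, hu0]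
      simp only [mul_zero]
      constructor
      · rintro (⟨_, h1, h2⟩ | ⟨h1, _⟩)
        · omega
        · linarith
      · intro h
        exact Or.inl ⟨le_of_lt hA0, by omega, by omega⟩
    · have hu0 : 0 < u := norm_pos_iff.mpr hz
      by_cases hw : w = 0
      · have hv0 : v = 0 := by simp [hv, hw]
        refine ⟨⌊(Real.log A - Real.log u) / Real.log A⌋, fun n => ?_⟩
        rw [hmem, hopf_le_iff ha hu0, hopf_lt_iff ha hu0, hv0]
        simp only [mul_zero]
        constructor
        · rintro (⟨_, h1, _⟩ | ⟨h1, h2, _⟩)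
          · linarith
          · omega
        · intro h
          exact Or.inr ⟨by omega, by omega, le_of_lt hB0⟩
      · have hv0 : 0 < v := norm_pos_iff.mpr hw
        refine ⟨min ⌊(Real.log A - Real.log u) / Real.log A⌋
            ⌊(Real.log B - Real.log v) / Real.log B⌋, fun n => ?_⟩
        rw [hmem, hopf_le_iff ha hu0, hopf_lt_iff ha hu0,
          hopf_le_iff hB1 hv0, hopf_lt_iff hB1 hv0]
        omega
  obtain ⟨n₀, hn₀⟩ := key
  refine ⟨(a ^ n₀ * z, b ^ n₀ * w), ⟨(hn₀ n₀).mpr rfl, n₀, rfl⟩, ?_⟩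
  rintro q ⟨hqF, m, rfl⟩
  have : m = n₀ := (hn₀ m).mp hqF
  rw [this]
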